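/- Let S be a hyponormal unilateral weighted shift on H with nonzero weight sequence (α_n)_{n≥1} and M = lim_{n→∞} |α_n|. Then the compression spectrum of S is exactly the open disk {λ ∈ ℂ : |λ| < M}; that is, the range of λI − S is not dense in H if and only if |λ| < M. -/

import Mathlib

open scoped ComplexConjugate InnerProductSpace ENNReal

theorem compressionSpectrum_of_hyponormal_unilateral_weighted_shift
    {H : Type*} [NormedAddCommGroup H] [InnerProductSpace ℂ H] [CompleteSpace H]
    (e : HilbertBasis ℕ ℂ H) (α : ℕ → ℂ) (S : H →L[ℂ] H)
    (hS : ∀ n : ℕ, S (e n) = α n • e (n + 1))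
    (hmono : ∀ n : ℕ, ‖α n‖ ≤ ‖α (n + 1)‖)
    (hnz : ∀ n : ℕ, α n ≠ 0)
    (M : ℝ) (hM : Filter.Tendsto (fun n : ℕ => ‖α n‖) Filter.atTop (nhds M)) :
    {lam : ℂ | ¬ DenseRange ⇑(lam • (1 : H →L[ℂ] H) - S)}
      = {lam : ℂ | ‖lam‖ < M} := by
  have hmon : Monotone fun n => ‖α n‖ := monotone_nat_of_le_succ hmono
  have hle : ∀ n, ‖α n‖ ≤ M := fun n => hmon.ge_of_tendsto hM n
  have hM0 : 0 < M := lt_of_lt_of_le (norm_pos_iff.mpr (hnz 0)) (hle 0)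
  ext lam
  simp only [Set.mem_setOf_eq]
  set T : H →L[ℂ] H := lam • (1 : H →L[ℂ] H) - S with hT
  have hTapp : ∀ n : ℕ, T (e n) = lam • e n - α n • e (n + 1) := by
    intro n
    simp [hT, hS n]
  have hdense : DenseRange ⇑T ↔ (LinearMap.range (T : H →ₗ[ℂ] H))ᗮ = ⊥ := by
    rw [← Submodule.topologicalClosure_eq_top_iff,
      ← Submodule.dense_iff_topologicalClosure_eq_top, DenseRange, LinearMap.coe_range (f := (T : H →ₗ[ℂ] H)), ContinuousLinearMap.coe_coe]
  rw [hdense]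
  constructor
  · -- not dense → ‖lam‖ < M
    intro hbot
    by_contra hge
    push_neg at hge  -- M ≤ ‖lam‖
    apply hbot
    rw [Submodule.eq_bot_iff]
    intro x hx
    rw [Submodule.mem_orthogonal] at hx
    set d : ℕ → ℂ := fun n => e.repr x n with hd
    have hrec : ∀ n, conj lam * d n = conj (α n) * d (n + 1) := by
      intro n
      have h0 : ⟪T (e n), x⟫_ℂ = 0 := hx _ (LinearMap.mem_range_self (T : H →ₗ[ℂ] H) (e n))
      rw [hTapp n, inner_sub_left, inner_smul_left, inner_smul_left,
        ← e.repr_apply_apply, ← e.repr_apply_apply, sub_eq_zero] at h0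
      exact h0
    have hnorm : ∀ n, ‖d n‖ ≤ ‖d (n + 1)‖ := by
      intro n
      have h1 : ‖lam‖ * ‖d n‖ = ‖α n‖ * ‖d (n + 1)‖ := by
        have := congrArg norm (hrec n)
        simpa [norm_mul] using this
      nlinarith [norm_nonneg (d n), norm_nonneg (d (n+1)), norm_pos_iff.mpr (hnz n),
        hle n, hge, norm_nonneg lam]
    have hdmon : Monotone fun n => ‖d n‖ := monotone_nat_of_le_succ hnorm
    have hsum : Summable fun n => ‖d n‖ ^ (2 : ℝ) := by
      have := (lp.memℓp (e.repr x)).summable (p := 2) (by norm_num)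
      simpa using this
    have hten : Filter.Tendsto (fun n => ‖d n‖ ^ (2 : ℝ)) Filter.atTop (nhds 0) :=
      hsum.tendsto_atTop_zero
    have hd0 : d 0 = 0 := by
      have h2 : ‖d 0‖ ^ (2 : ℝ) ≤ 0 := by
        refine ge_of_tendsto hten (Filter.Eventually.of_forall fun n => ?_)
        exact Real.rpow_le_rpow (norm_nonneg _) (hdmon (Nat.zero_le n)) (by norm_num)
      have h3 : 0 ≤ ‖d 0‖ ^ (2 : ℝ) := Real.rpow_nonneg (norm_nonneg _) _
      have h5 : ‖d 0‖ ^ (2 : ℝ) = 0 := le_antisymm h2 h3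
      have h4 : ‖d 0‖ = 0 := (Real.rpow_eq_zero (norm_nonneg _) (by norm_num)).mp h5
      exact norm_eq_zero.mp h4
    have hdall : ∀ n, d n = 0 := by
      intro n
      induction n with
      | zero => exact hd0
      | succ k ih =>
        have h6 := hrec k
        rw [ih, mul_zero] at h6
        have hα : conj (α k) ≠ 0 := by simpa using hnz k
        rcases mul_eq_zero.mp h6.symm with h | h
        · exact absurd h hα
        · exact h
    have hr0 : e.repr x = 0 := by
      ext n
      simpa using hdall n
    have := e.repr.injective (by simpa using hr0 : e.repr x = e.repr 0)
    simpa using this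
  · -- ‖lam‖ < M → not dense
    intro hlt hbot
    set c : ℕ → ℂ := fun n => conj (lam ^ n / ∏ k ∈ Finset.range n, α k) with hc
    have hP : ∀ n, (∏ k ∈ Finset.range n, α k) ≠ 0 := fun n =>
      Finset.prod_ne_zero_iff.mpr fun k _ => hnz k
    have hstep : ∀ n, c (n + 1) = conj (lam / α n) * c n := by
      intro n
      rw [hc]
      simp only
      rw [← map_mul]
      congr 1
      rw [Finset.prod_range_succ, pow_succ]
      field_simp [hP n, hnz n]
    have hmem : Memℓp c 2 := by
      apply memℓp_gen
      have h2 : (2 : ℝ≥0∞).toReal = 2 := by norm_num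
      rw [h2]
      have hsq : Summable fun n => ‖c n‖ ^ (2 : ℕ) := by
        rcases eq_or_ne lam 0 with h0 | h0
        · apply summable_of_ne_finset_zero (s := {0})
          intro n hn
          have hn1 : 1 ≤ n := Nat.one_le_iff_ne_zero.mpr (by simpa using hn)
          have : c n = 0 := by
            simp [hc, h0, zero_pow (Nat.one_le_iff_ne_zero.mp hn1)]
          simp [this]
        · have hcne : ∀ n, c n ≠ 0 := by
            intro n
            simp only [hc, ne_eq, map_eq_zero, div_eq_zero_iff, not_or]
            exact ⟨pow_ne_zero n h0, hP n⟩
          have hfne : ∀ n, ‖c n‖ ^ (2 : ℕ) ≠ 0 := fun n =>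
            pow_ne_zero _ (norm_ne_zero_iff.mpr (hcne n))
          refine summable_of_ratio_test_tendsto_lt_one (l := (‖lam‖ / M) ^ 2)
            ?_ (Filter.Eventually.of_forall hfne) ?_
          · have h7 : ‖lam‖ / M < 1 := (div_lt_one hM0).mpr hlt
            have h8 : 0 ≤ ‖lam‖ / M := by positivity
            nlinarith
          · have hratio : ∀ n, ‖(‖c (n+1)‖ ^ (2:ℕ))‖ / ‖(‖c n‖ ^ (2:ℕ))‖
                = (‖lam‖ / ‖α n‖) ^ 2 := by
              intro n
              have h9 : ‖c (n + 1)‖ = ‖lam‖ / ‖α n‖ * ‖c n‖ := by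
                rw [hstep n, norm_mul, RCLike.norm_conj, norm_div]
              rw [Real.norm_of_nonneg (by positivity), Real.norm_of_nonneg (by positivity),
                h9, mul_pow, mul_div_assoc]
              rw [div_self (pow_ne_zero _ (norm_ne_zero_iff.mpr (hcne n))), mul_one]
            have h10 : Filter.Tendsto (fun n => (‖lam‖ / ‖α n‖) ^ 2)
                Filter.atTop (nhds ((‖lam‖ / M) ^ 2)) :=
              (Filter.Tendsto.div tendsto_const_nhds hM hM0.ne').pow 2
            exact h10.congr fun n => (hratio n).symm
      exact hsq.congr fun n => by
        rw [← Real.rpow_natCast (‖c n‖) 2]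
        norm_num
    set x : H := e.repr.symm (⟨c, hmem⟩ : lp (fun _ : ℕ => ℂ) 2) with hxdef
    have hxrepr : ∀ n, e.repr x n = c n := by
      intro n
      rw [hxdef, LinearIsometryEquiv.apply_symm_apply]
    have hinner : ∀ n, ⟪x, e n⟫_ℂ = lam ^ n / ∏ k ∈ Finset.range n, α k := by
      intro n
      rw [← inner_conj_symm, ← e.repr_apply_apply, hxrepr n, hc]
      simp
    have hxne : x ≠ 0 := by
      intro h
      have h11 := hxrepr 0
      rw [h] at h11
      simp [hc] at h11
    have hxorth : x ∈ (LinearMap.range (T : H →ₗ[ℂ] H))ᗮ := by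
      rw [Submodule.mem_orthogonal]
      rintro _ ⟨y, rfl⟩
      have hg : (innerSL ℂ x).comp T = 0 := by
        refine ContinuousLinearMap.ext_on
          (Submodule.dense_iff_topologicalClosure_eq_top.mpr e.dense_span) ?_
        rintro _ ⟨n, rfl⟩
        simp only [ContinuousLinearMap.comp_apply, ContinuousLinearMap.zero_apply, innerSL_apply_apply]
        rw [hTapp n, inner_sub_right, inner_smul_right, inner_smul_right, hinner n, hinner (n+1)]
        rw [Finset.prod_range_succ, pow_succ, sub_eq_zero]
        field_simp [hP n, hnz n]
      have h12 : ⟪x, T y⟫_ℂ = 0 := by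
        have := congrFun (congrArg DFunLike.coe hg) y
        simpa using this
      rw [← inner_conj_symm, ContinuousLinearMap.coe_coe, h12, map_zero]
    rw [hbot] at hxorth
    exact hxne (by simpa using hxorth)
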